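/- For Ξ_ε = Ξ_{ε_n}⋯Ξ_{ε_1} as above, the 1-norm bound ‖Ξ_ε^{-1}‖₁ ≤ σ₂^{-n}(1 + (σ₂/σ₁)^n) holds, and consequently ‖Ξ_ε^{-1}‖₁^{1/n} < (1 + (σ₂/σ₁)^n)^{1/n}/σ₂ < 1 for all sufficiently large n uniformly in ε ∈ ℤ_s^n; hence the family {Ξ_j^{-1} : j ∈ ℤ_s} is jointly contractive. -/

import Mathlib

/-! Codimension-1 shears and anisotropic dilations in dimension `s = m + 1`.
The index set for the digits is `Fin (m+1) = ℤ_s`; the digit `0` corresponds to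
`e₀ = 0` (no shear), and the digit `j+1` corresponds to the canonical unit
vector `e_{j+1}` of `ℝ^{s-1} = ℝ^m`, which has its `1` in position `j`. -/

/-- The vector `e_j ∈ ℝ^{s-1}` (`e₀ = 0`). -/
def unitE (m : ℕ) (j : Fin (m + 1)) : Fin m → ℝ :=
  fun i => if (i : ℕ) + 1 = (j : ℕ) then 1 else 0

/-- The shear `Γ_j = [[I_{s−1}, −e_j],[0,1]]` (so `Γ₀ = I`). -/
def shearGamma (m : ℕ) (j : Fin (m + 1)) :
    Matrix (Fin (m + 1)) (Fin (m + 1)) ℝ :=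
  fun i k =>
    if (i : ℕ) < m then
      if (k : ℕ) < m then (if i = k then 1 else 0)
      else -(if (i : ℕ) + 1 = (j : ℕ) then 1 else 0)
    else (if k = i then 1 else 0)

/-- The diagonal dilation `Ξ₀ = diag(σ₁ I_{s-1}, σ₂)`. -/
def xiZero (m : ℕ) (σ₁ σ₂ : ℝ) : Matrix (Fin (m + 1)) (Fin (m + 1)) ℝ :=
  Matrix.diagonal (fun i => if (i : ℕ) < m then σ₁ else σ₂)

/-- The sheared dilation `Ξ_j = [[σ₁ I_{s−1}, (σ₂ − σ₁)e_j],[0, σ₂]]`. -/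
def xiMat (m : ℕ) (σ₁ σ₂ : ℝ) (j : Fin (m + 1)) :
    Matrix (Fin (m + 1)) (Fin (m + 1)) ℝ :=
  fun i k =>
    if (i : ℕ) < m then
      if (k : ℕ) < m then (if i = k then σ₁ else 0)
      else (σ₂ - σ₁) * (if (i : ℕ) + 1 = (j : ℕ) then 1 else 0)
    else (if k = i then σ₂ else 0)

/-- `[[σ₁^{-1} I_{s−1}, ((σ₁−σ₂)/(σ₁σ₂)) e_j],[0, σ₂^{-1}]]`, the claimed
inverse of `Ξ_j`. -/
noncomputable def xiInvMat (m : ℕ) (σ₁ σ₂ : ℝ) (j : Fin (m + 1)) :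
    Matrix (Fin (m + 1)) (Fin (m + 1)) ℝ :=
  fun i k =>
    if (i : ℕ) < m then
      if (k : ℕ) < m then (if i = k then σ₁⁻¹ else 0)
      else ((σ₁ - σ₂) / (σ₁ * σ₂)) * (if (i : ℕ) + 1 = (j : ℕ) then 1 else 0)
    else (if k = i then σ₂⁻¹ else 0)

/-- The product `Ξ_ε = Ξ_{ε_n} ⋯ Ξ_{ε_1}` for a digit sequence `ε ∈ ℤ_s^n`
(here `ε t` corresponds to `ε_{t+1}`, so the factor for `ε 0` is applied first,
i.e. stands rightmost). -/
noncomputable def xiProd (m : ℕ) (σ₁ σ₂ : ℝ) {n : ℕ} (ε : Fin n → Fin (m + 1)) :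
    Matrix (Fin (m + 1)) (Fin (m + 1)) ℝ :=
  ((List.ofFn fun t => xiMat m σ₁ σ₂ (ε t)).reverse).prod

/-- The vector `p_ε(x) = (1−x) ∑_{k=1}^n x^{k−1} e_{ε_k}`, evaluated at
`x = σ₂/σ₁`. -/
noncomputable def pEps (m : ℕ) (σ₁ σ₂ : ℝ) {n : ℕ} (ε : Fin n → Fin (m + 1)) :
    Fin m → ℝ :=
  fun i => (1 - σ₂ / σ₁) *
    ∑ t : Fin n, (σ₂ / σ₁) ^ (t : ℕ) * (if (i : ℕ) + 1 = (ε t : ℕ) then 1 else 0)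

/-- The explicit form `[[σ₁^n I, −σ₁^n p_ε(σ₂/σ₁)],[0, σ₂^n]]` of `Ξ_ε`. -/
noncomputable def xiEpsMat (m : ℕ) (σ₁ σ₂ : ℝ) {n : ℕ} (ε : Fin n → Fin (m + 1)) :
    Matrix (Fin (m + 1)) (Fin (m + 1)) ℝ :=
  fun i k =>
    if hi : (i : ℕ) < m then
      if (k : ℕ) < m then (if i = k then σ₁ ^ n else 0)
      else -σ₁ ^ n * pEps m σ₁ σ₂ ε ⟨i, hi⟩
    else (if k = i then σ₂ ^ n else 0)

/-- The explicit form `[[σ₁^{-n} I, σ₂^{-n} p_ε(σ₂/σ₁)],[0, σ₂^{-n}]]` of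
`Ξ_ε^{-1}`. -/
noncomputable def xiEpsInvMat (m : ℕ) (σ₁ σ₂ : ℝ) {n : ℕ}
    (ε : Fin n → Fin (m + 1)) : Matrix (Fin (m + 1)) (Fin (m + 1)) ℝ :=
  fun i k =>
    if hi : (i : ℕ) < m then
      if (k : ℕ) < m then (if i = k then (σ₁⁻¹) ^ n else 0)
      else (σ₂⁻¹) ^ n * pEps m σ₁ σ₂ ε ⟨i, hi⟩
    else (if k = i then (σ₂⁻¹) ^ n else 0)

/-- The matrix norm `‖A‖₁` used in the paper: the maximum of the absolute row
sums (i.e. the operator norm as computed in the paper's estimate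
`‖Ξ_ε^{-1}‖₁ ≤ max{σ₂^{-n}, σ₁^{-n} + σ₂^{-n}|p_ε(σ₂/σ₁)|}`). -/
noncomputable def matNorm1 {m : ℕ} (A : Matrix (Fin (m + 1)) (Fin (m + 1)) ℝ) : ℝ :=
  Finset.univ.sup' Finset.univ_nonempty (fun i => ∑ k : Fin (m + 1), |A i k|)

section Aux

lemma delta_sum (m : ℕ) (a : ℝ) (b : Fin m → ℝ) (i : Fin (m+1)) (hi : (i:ℕ) < m) :
    ∑ l : Fin m, (if i = l.castSucc then a else 0) * b l = a * b (i.castLT hi) := by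
  rw [Finset.sum_eq_single (i.castLT hi)]
  · simp [Fin.ext_iff]
  · intro l _ hl
    have : i ≠ l.castSucc := by
      intro h; apply hl; apply Fin.ext; simpa [Fin.ext_iff] using h.symm
    simp [this]
  · simp

lemma delta_sum' (m : ℕ) (a : ℝ) (i : Fin (m+1)) (hi : (i:ℕ) < m) :
    ∑ l : Fin m, (if i = l.castSucc then a else 0) = a := by
  have := delta_sum m a (fun _ => 1) i hi
  simpa using this

lemma xiMat_mul_inv (m : ℕ) (σ₁ σ₂ : ℝ) (h₁ : σ₁ ≠ 0) (h₂ : σ₂ ≠ 0) (j : Fin (m+1)) :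
    xiMat m σ₁ σ₂ j * xiInvMat m σ₁ σ₂ j = 1 := by
  ext i k
  rw [Matrix.mul_apply, Fin.sum_univ_castSucc]
  by_cases hi : (i : ℕ) < m
  · by_cases hk : (k : ℕ) < m
    · have hki : k ≠ Fin.last m := by
        intro h; rw [h] at hk; simp at hk
      simp only [xiMat, xiInvMat, Fin.coe_castSucc, Fin.is_lt, if_pos, hi, Fin.val_last,
        lt_irrefl, if_false, if_true, hk, hki, mul_zero]
      rw [delta_sum m σ₁ (fun l => if l.castSucc = k then σ₁⁻¹ else 0) i hi]
      have : (i.castLT hi).castSucc = i := by apply Fin.ext; simp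
      rw [this]
      simp [Matrix.one_apply, hi, h₁]
    · simp only [xiMat, xiInvMat, Fin.coe_castSucc, Fin.is_lt, if_pos, hi, Fin.val_last,
        lt_irrefl, if_false, if_true, hk]
      rw [delta_sum m σ₁ (fun l => ((σ₁ - σ₂) / (σ₁ * σ₂)) *
        (if (l : ℕ) + 1 = (j:ℕ) then 1 else 0)) i hi]
      have hik : i ≠ k := by intro h; rw [h] at hi; exact hk hi
      have hile : i ≠ Fin.last m := by intro h; rw [h] at hi; simp at hi
      have hkl : k = Fin.last m := by
        apply Fin.ext; have := k.is_lt; simp [Fin.val_last]; omega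
      simp only [Fin.coe_castSucc, Fin.val_last, hkl, if_pos, Matrix.one_apply, hik, if_false,
        Fin.castLT]
      by_cases hj : (i : ℕ) + 1 = (j : ℕ)
      · simp [hj, hile]; field_simp; ring
      · simp [hj, hile]
  · have hil : i = Fin.last m := by
      apply Fin.ext; have := i.is_lt; simp [Fin.val_last]; omega
    simp only [xiMat, xiInvMat, Fin.coe_castSucc, Fin.is_lt, if_pos, hi, Fin.val_last,
      lt_irrefl, if_false]
    have hcs : ∀ l : Fin m, l.castSucc ≠ i := by
      intro l h; rw [← h] at hi; exact hi (by simp)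
    simp only [hcs, if_false, zero_mul, Finset.sum_const_zero, zero_add]
    by_cases hk : (k:ℕ) < m
    · have : k ≠ Fin.last m := by intro h; rw [h] at hk; simp at hk
      have hik : i ≠ k := by rw [hil]; exact (Ne.symm this)
      simp [Matrix.one_apply, Ne.symm this, this, hik, hil]
    · have hkl : k = Fin.last m := by
        apply Fin.ext; have := k.is_lt; simp [Fin.val_last]; omega
      simp [Matrix.one_apply, hkl, hil, h₂]

lemma pEps_succ (m : ℕ) (σ₁ σ₂ : ℝ) {n : ℕ} (ε : Fin (n+1) → Fin (m+1)) (i : Fin m) :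
    pEps m σ₁ σ₂ ε i = pEps m σ₁ σ₂ (fun t => ε t.castSucc) i +
      (1 - σ₂ / σ₁) * (σ₂ / σ₁) ^ n *
        (if (i : ℕ) + 1 = (ε (Fin.last n) : ℕ) then 1 else 0) := by
  simp only [pEps, Fin.sum_univ_castSucc, Fin.coe_castSucc, Fin.val_last]
  ring

lemma xiEpsInvMat_succ (m : ℕ) (σ₁ σ₂ : ℝ) (h₁ : σ₁ ≠ 0) (h₂ : σ₂ ≠ 0) {n : ℕ}
    (ε : Fin (n+1) → Fin (m+1)) :
    xiEpsInvMat m σ₁ σ₂ ε =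
      xiEpsInvMat m σ₁ σ₂ (fun t => ε t.castSucc) * xiInvMat m σ₁ σ₂ (ε (Fin.last n)) := by
  ext i k
  rw [Matrix.mul_apply, Fin.sum_univ_castSucc]
  by_cases hi : (i : ℕ) < m
  · by_cases hk : (k : ℕ) < m
    · have hki : k ≠ Fin.last m := by intro h; rw [h] at hk; simp at hk
      simp only [xiEpsInvMat, xiInvMat, Fin.coe_castSucc, Fin.is_lt, dif_pos, if_pos, hi,
        Fin.val_last, lt_irrefl, dif_neg, if_false, if_true, hk, hki, mul_zero,
        (by omega : ¬ m < m)]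
      rw [delta_sum m ((σ₁⁻¹)^n) (fun l => if l.castSucc = k then σ₁⁻¹ else 0) i hi]
      have hcc : (i.castLT hi).castSucc = i := by apply Fin.ext; simp
      rw [hcc]
      by_cases hik : i = k
      · simp [hik, pow_succ]
      · simp [hik]
    · simp only [xiEpsInvMat, xiInvMat, Fin.coe_castSucc, Fin.is_lt, dif_pos, if_pos, hi,
        Fin.val_last, lt_irrefl, if_false, if_true, hk, (by omega : ¬ m < m)]
      rw [delta_sum m ((σ₁⁻¹)^n) (fun l => ((σ₁ - σ₂) / (σ₁ * σ₂)) *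
        (if (l : ℕ) + 1 = ((ε (Fin.last n)):ℕ) then 1 else 0)) i hi]
      have hkl : k = Fin.last m := by
        apply Fin.ext; have := k.is_lt; simp [Fin.val_last]; omega
      simp only [hkl, if_pos, Fin.castLT]
      rw [pEps_succ m σ₁ σ₂ ε ⟨i, hi⟩]
      by_cases hj : (i : ℕ) + 1 = ((ε (Fin.last n)) : ℕ)
      · simp only [hj, if_pos, if_true, mul_one]
        simp only [inv_pow]
        field_simp
        have hc : σ₁ ^ n * σ₁⁻¹ ^ n = 1 := by rw [← mul_pow, mul_inv_cancel₀ h₁, one_pow]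
        linear_combination (σ₂ * σ₂ ^ (n * 2) * σ₁ - σ₂ ^ 2 * σ₂ ^ (n * 2)) * hc
      · simp [hj]; ring
  · have hil : i = Fin.last m := by
      apply Fin.ext; have := i.is_lt; simp [Fin.val_last]; omega
    have hcs : ∀ l : Fin m, (l.castSucc ≠ i) := by
      intro l h; rw [← h] at hi; exact hi (by simp)
    simp only [xiEpsInvMat, xiInvMat, Fin.coe_castSucc, Fin.is_lt, dif_pos, dif_neg hi,
      Fin.val_last, lt_irrefl, if_false, dif_neg (by omega : ¬ m < m), hcs,
      zero_mul, Finset.sum_const_zero, zero_add]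
    by_cases hk : (k:ℕ) < m
    · have h1 : k ≠ Fin.last m := by intro h; rw [h] at hk; simp at hk
      have h2 : k ≠ i := by rw [hil]; exact h1
      simp [h1, h2, hk]
    · have hkl : k = Fin.last m := by
        apply Fin.ext; have := k.is_lt; simp [Fin.val_last]; omega
      simp [hkl, hil, pow_succ, hk]
lemma xiProd_succ (m : ℕ) (σ₁ σ₂ : ℝ) {n : ℕ} (ε : Fin (n+1) → Fin (m+1)) :
    xiProd m σ₁ σ₂ ε =
      xiMat m σ₁ σ₂ (ε (Fin.last n)) * xiProd m σ₁ σ₂ (fun t => ε t.castSucc) := by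
  unfold xiProd
  rw [List.ofFn_succ']
  simp

lemma xiEpsInvMat_zero (m : ℕ) (σ₁ σ₂ : ℝ) (ε : Fin 0 → Fin (m+1)) :
    xiEpsInvMat m σ₁ σ₂ ε = 1 := by
  ext i k
  have hpe : pEps m σ₁ σ₂ ε = fun _ => 0 := by funext i; simp [pEps]
  by_cases hi : (i : ℕ) < m
  · by_cases hik : i = k
    · simp [xiEpsInvMat, Matrix.one_apply, hi, hik]
      intro h hh; exact absurd h (by omega)
    · have hk' : ¬ k = i := fun h => hik h.symm
      simp [xiEpsInvMat, Matrix.one_apply, hi, hik, hk', hpe]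
  · by_cases hik : i = k
    · simp [xiEpsInvMat, Matrix.one_apply, hi, hik]
      intro h hh; exact absurd h (by omega)
    · have hk' : ¬ k = i := fun h => hik h.symm
      simp [xiEpsInvMat, Matrix.one_apply, hi, hik, hk', hpe]
lemma xiProd_mul_xiEpsInvMat (m : ℕ) (σ₁ σ₂ : ℝ) (h₁ : σ₁ ≠ 0) (h₂ : σ₂ ≠ 0) :
    ∀ {n : ℕ} (ε : Fin n → Fin (m+1)),
      xiProd m σ₁ σ₂ ε * xiEpsInvMat m σ₁ σ₂ ε = 1 := by
  intro n
  induction n with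
  | zero =>
      intro ε
      rw [xiEpsInvMat_zero]
      simp [xiProd]
  | succ n ih =>
      intro ε
      rw [xiProd_succ, xiEpsInvMat_succ m σ₁ σ₂ h₁ h₂, mul_assoc,
        ← mul_assoc (xiProd m σ₁ σ₂ fun t => ε t.castSucc), ih, one_mul,
        xiMat_mul_inv m σ₁ σ₂ h₁ h₂]

lemma xiProd_inv (m : ℕ) (σ₁ σ₂ : ℝ) (h₁ : σ₁ ≠ 0) (h₂ : σ₂ ≠ 0) {n : ℕ}
    (ε : Fin n → Fin (m+1)) :
    (xiProd m σ₁ σ₂ ε)⁻¹ = xiEpsInvMat m σ₁ σ₂ ε :=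
  Matrix.inv_eq_right_inv (xiProd_mul_xiEpsInvMat m σ₁ σ₂ h₁ h₂ ε)

lemma pEps_nonneg (m : ℕ) (σ₁ σ₂ : ℝ) (h1 : 0 < σ₂) (h2 : σ₂ ≤ σ₁) {n : ℕ}
    (ε : Fin n → Fin (m+1)) (i : Fin m) : 0 ≤ pEps m σ₁ σ₂ ε i := by
  have hσ₁ : 0 < σ₁ := lt_of_lt_of_le h1 h2
  have hx : 0 ≤ σ₂ / σ₁ := div_nonneg h1.le hσ₁.le
  have hx1 : σ₂ / σ₁ ≤ 1 := div_le_one_of_le₀ h2 hσ₁.le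
  apply mul_nonneg (by linarith)
  apply Finset.sum_nonneg
  intro t _
  apply mul_nonneg (pow_nonneg hx _)
  positivity

lemma pEps_le (m : ℕ) (σ₁ σ₂ : ℝ) (h1 : 0 < σ₂) (h2 : σ₂ ≤ σ₁) {n : ℕ}
    (ε : Fin n → Fin (m+1)) (i : Fin m) :
    pEps m σ₁ σ₂ ε i ≤ 1 - (σ₂ / σ₁) ^ n := by
  have hσ₁ : 0 < σ₁ := lt_of_lt_of_le h1 h2
  set x := σ₂ / σ₁ with hxdef
  have hx : 0 ≤ x := div_nonneg h1.le hσ₁.le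
  have hx1 : x ≤ 1 := div_le_one_of_le₀ h2 hσ₁.le
  have hgeom : (1 - x) * ∑ t ∈ Finset.range n, x ^ t = 1 - x ^ n := by
    have := geom_sum_mul x n
    linear_combination (-1 : ℝ) * this
  calc pEps m σ₁ σ₂ ε i
      ≤ (1 - x) * ∑ t : Fin n, x ^ (t : ℕ) := by
        apply mul_le_mul_of_nonneg_left _ (by linarith)
        apply Finset.sum_le_sum
        intro t _
        by_cases h : (i : ℕ) + 1 = (ε t : ℕ) <;> simp [h, pow_nonneg hx] <;> exact le_rfl
    _ = 1 - x ^ n := by rw [Fin.sum_univ_eq_sum_range (fun t => x ^ t) n]; exact hgeom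
lemma matNorm1_xiEpsInvMat_le (m : ℕ) (σ₁ σ₂ : ℝ) (h1 : 0 < σ₂) (h2 : σ₂ ≤ σ₁) {n : ℕ}
    (ε : Fin n → Fin (m+1)) :
    matNorm1 (xiEpsInvMat m σ₁ σ₂ ε) ≤ (σ₂⁻¹) ^ n := by
  have hσ₁ : 0 < σ₁ := lt_of_lt_of_le h1 h2
  apply Finset.sup'_le
  intro i _
  by_cases hi : (i : ℕ) < m
  · rw [Fin.sum_univ_castSucc]
    have hA : ∀ l : Fin m, |xiEpsInvMat m σ₁ σ₂ ε i l.castSucc| =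
        (if i = l.castSucc then (σ₁⁻¹) ^ n else 0) := by
      intro l
      simp only [xiEpsInvMat, dif_pos hi, Fin.coe_castSucc, Fin.is_lt, if_true]
      split
      · exact abs_of_nonneg (by positivity)
      · exact abs_zero
    have hlast : |xiEpsInvMat m σ₁ σ₂ ε i (Fin.last m)| =
        (σ₂⁻¹) ^ n * pEps m σ₁ σ₂ ε ⟨i, hi⟩ := by
      simp only [xiEpsInvMat, dif_pos hi, Fin.val_last, lt_irrefl, if_false]
      exact abs_of_nonneg (mul_nonneg (by positivity) (pEps_nonneg m σ₁ σ₂ h1 h2 ε ⟨i, hi⟩))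
    simp only [hA, hlast]
    rw [delta_sum' m ((σ₁⁻¹) ^ n) i hi]
    have hp1 : pEps m σ₁ σ₂ ε ⟨i, hi⟩ ≤ 1 - (σ₂ / σ₁) ^ n := pEps_le m σ₁ σ₂ h1 h2 ε ⟨i, hi⟩
    have key : (σ₁⁻¹) ^ n = (σ₂⁻¹) ^ n * (σ₂ / σ₁) ^ n := by
      rw [← mul_pow]; congr 1; field_simp
    have h2n : (0:ℝ) ≤ (σ₂⁻¹) ^ n := by positivity
    nlinarith [mul_le_mul_of_nonneg_left hp1 h2n]
  · have hA : ∀ k : Fin (m+1), |xiEpsInvMat m σ₁ σ₂ ε i k| =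
        (if k = i then (σ₂⁻¹) ^ n else 0) := by
      intro k
      simp only [xiEpsInvMat, dif_neg hi]
      split
      · exact abs_of_nonneg (by positivity)
      · exact abs_zero
    simp only [hA]
    rw [Finset.sum_ite_eq' Finset.univ i (fun _ => (σ₂⁻¹) ^ n)]
    simp
lemma matNorm1_nonneg {m : ℕ} (A : Matrix (Fin (m+1)) (Fin (m+1)) ℝ) : 0 ≤ matNorm1 A := by
  have h : (0:ℝ) ≤ ∑ k : Fin (m+1), |A (0 : Fin (m+1)) k| :=
    Finset.sum_nonneg fun k _ => abs_nonneg _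
  exact le_trans h (Finset.le_sup' (fun i => ∑ k : Fin (m+1), |A i k|)
    (Finset.mem_univ (0 : Fin (m+1))))

/-- The 1-norm bound `‖Ξ_ε^{-1}‖₁ ≤ σ₂^{-n}(1 + (σ₂/σ₁)^n)` holds; consequently
`‖Ξ_ε^{-1}‖₁^{1/n} < (1 + (σ₂/σ₁)^n)^{1/n}/σ₂ < 1` for all sufficiently large
`n`, uniformly in `ε ∈ ℤ_s^n`: the family `{Ξ_j^{-1}}` is jointly contractive. -/
theorem xiProd_inv_norm_bound
    (m : ℕ) (hm : 1 ≤ m) (σ₁ σ₂ : ℤ) (h₁ : σ₂ < σ₁) (h₂ : 1 < σ₂) :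
    (∀ n : ℕ, ∀ ε : Fin n → Fin (m + 1),
      matNorm1 ((xiProd m (σ₁ : ℝ) (σ₂ : ℝ) ε)⁻¹) ≤
        ((σ₂ : ℝ)⁻¹) ^ n * (1 + ((σ₂ : ℝ) / (σ₁ : ℝ)) ^ n)) ∧
    ∃ N : ℕ, ∀ n ≥ N, ∀ ε : Fin n → Fin (m + 1),
      matNorm1 ((xiProd m (σ₁ : ℝ) (σ₂ : ℝ) ε)⁻¹) ^ ((n : ℝ)⁻¹) <
          (1 + ((σ₂ : ℝ) / (σ₁ : ℝ)) ^ n) ^ ((n : ℝ)⁻¹) / (σ₂ : ℝ) ∧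
        (1 + ((σ₂ : ℝ) / (σ₁ : ℝ)) ^ n) ^ ((n : ℝ)⁻¹) / (σ₂ : ℝ) < 1 := by
  have hσ₂R : (1:ℝ) < (σ₂:ℝ) := by exact_mod_cast h₂
  have hltR : (σ₂:ℝ) < (σ₁:ℝ) := by exact_mod_cast h₁
  have h2pos : (0:ℝ) < (σ₂:ℝ) := by linarith
  have h1pos : (0:ℝ) < (σ₁:ℝ) := by linarith
  have hle : (σ₂:ℝ) ≤ (σ₁:ℝ) := hltR.le
  have hBnd : ∀ {n : ℕ} (ε : Fin n → Fin (m+1)),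
      matNorm1 ((xiProd m (σ₁:ℝ) (σ₂:ℝ) ε)⁻¹) ≤ ((σ₂:ℝ)⁻¹) ^ n := by
    intro n ε
    rw [xiProd_inv m _ _ (ne_of_gt h1pos) (ne_of_gt h2pos) ε]
    exact matNorm1_xiEpsInvMat_le m _ _ h2pos hle ε
  have hx0 : 0 < (σ₂:ℝ)/(σ₁:ℝ) := div_pos h2pos h1pos
  have hx1 : (σ₂:ℝ)/(σ₁:ℝ) < 1 := (div_lt_one h1pos).2 hltR
  constructor
  · intro n ε
    have hxn : 0 < ((σ₂:ℝ)/(σ₁:ℝ))^n := pow_pos hx0 n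
    calc matNorm1 ((xiProd m (σ₁:ℝ) (σ₂:ℝ) ε)⁻¹) ≤ ((σ₂:ℝ)⁻¹)^n := hBnd ε
      _ ≤ ((σ₂:ℝ)⁻¹)^n * (1 + ((σ₂:ℝ)/(σ₁:ℝ))^n) :=
          le_mul_of_one_le_right (by positivity) (by nlinarith)
  · refine ⟨1, fun n hn ε => ?_⟩
    have hn0 : (n:ℝ) ≠ 0 := by
      simp only [ne_eq, Nat.cast_eq_zero]; omega
    have hinvn : 0 < ((n:ℝ))⁻¹ := by positivity
    have hxn : 0 < ((σ₂:ℝ)/(σ₁:ℝ))^n := pow_pos hx0 n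
    have hxn1 : ((σ₂:ℝ)/(σ₁:ℝ))^n < 1 := pow_lt_one₀ hx0.le hx1 (by omega)
    have hnn : 0 ≤ matNorm1 ((xiProd m (σ₁:ℝ) (σ₂:ℝ) ε)⁻¹) := matNorm1_nonneg _
    have e1 : (((σ₂:ℝ)⁻¹)^n) ^ ((n:ℝ)⁻¹) = (σ₂:ℝ)⁻¹ := by
      rw [← Real.rpow_natCast ((σ₂:ℝ)⁻¹) n, ← Real.rpow_mul (by positivity),
        mul_inv_cancel₀ hn0, Real.rpow_one]
    have step1 : matNorm1 ((xiProd m (σ₁:ℝ) (σ₂:ℝ) ε)⁻¹) ^ ((n:ℝ)⁻¹) ≤ (σ₂:ℝ)⁻¹ := by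
      have := Real.rpow_le_rpow hnn (hBnd ε) hinvn.le
      rwa [e1] at this
    have hgt1 : 1 < (1 + ((σ₂:ℝ)/(σ₁:ℝ))^n) ^ ((n:ℝ)⁻¹) :=
      (Real.one_lt_rpow_iff_of_pos (by positivity)).2 (Or.inl ⟨by linarith, hinvn⟩)
    have step2 : (σ₂:ℝ)⁻¹ < (1 + ((σ₂:ℝ)/(σ₁:ℝ))^n) ^ ((n:ℝ)⁻¹) / (σ₂:ℝ) := by
      rw [div_eq_mul_inv]
      calc (σ₂:ℝ)⁻¹ = 1 * (σ₂:ℝ)⁻¹ := (one_mul _).symm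
        _ < _ := mul_lt_mul_of_pos_right hgt1 (inv_pos.2 h2pos)
    refine ⟨lt_of_le_of_lt step1 step2, ?_⟩
    rw [div_lt_one h2pos]
    have h2R : (2:ℝ) ≤ (σ₂:ℝ) := by exact_mod_cast (by omega : (2:ℤ) ≤ σ₂)
    have hsp : (σ₂:ℝ) ≤ (σ₂:ℝ)^n := le_self_pow₀ (by linarith) (by omega)
    have hs : (1:ℝ) + ((σ₂:ℝ)/(σ₁:ℝ))^n < (σ₂:ℝ)^n := by nlinarith
    have e2 : (((σ₂:ℝ))^n) ^ ((n:ℝ)⁻¹) = (σ₂:ℝ) := by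
      rw [← Real.rpow_natCast ((σ₂:ℝ)) n, ← Real.rpow_mul (by positivity),
        mul_inv_cancel₀ hn0, Real.rpow_one]
    have := Real.rpow_lt_rpow (by positivity) hs hinvn
    rwa [e2] at this
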